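/- Let N ≥ 1, let λ > 0 and c* > 0, let σ be the uniform probability measure on the unit sphere S^{N−1} of ℝ^N, and for R ≥ 0 define (T_R u)(x) := ∫_{S^{N−1}} u(x + R·y) dσ(y). Suppose (c,x) ↦ u_c(x) is a continuous and bounded function on (0,c*) × ℝ^N. For c ∈ (0,c*) set τ_c := λ/c, for t > 0 let n_c(t) be the unique m ∈ ℕ with m·τ_c < t ≤ (m+1)·τ_c, set R_c(t) := c·(t − n_c(t)·τ_c), and define v_c(x,t) := (T_{R_c(t)}((T_λ)^{n_c(t)} u_c))(x) (note c·τ_c = λ). Then for every fixed x ∈ ℝ^N and t > 0, the map c ↦ v_c(x,t) is continuous on (0,c*). -/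

import Mathlib

open MeasureTheory

/-- The uniform probability measure on the unit sphere of `ℝ^N`, viewed as a measure
on `ℝ^N` (the normalized surface measure, pushed forward along the inclusion). -/
noncomputable def sphereUniform (N : ℕ) : Measure (EuclideanSpace ℝ (Fin N)) :=
  ((volume : Measure (EuclideanSpace ℝ (Fin N))).toSphere Set.univ)⁻¹ •
    Measure.map (Subtype.val : Metric.sphere (0 : EuclideanSpace ℝ (Fin N)) 1 → _)
      (volume : Measure (EuclideanSpace ℝ (Fin N))).toSphere

/-- The spherical mean operator `(T_R u)(x) = ∫_{S^{N-1}} u (x + R y) dσ(y)`. -/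
noncomputable def sphMean (N : ℕ) (R : ℝ) (u : EuclideanSpace ℝ (Fin N) → ℝ)
    (x : EuclideanSpace ℝ (Fin N)) : ℝ :=
  ∫ y, u (x + R • y) ∂(sphereUniform N)
/-- For `t, τ > 0`, the unique `m ∈ ℕ` with `m τ < t ≤ (m+1) τ`. -/
noncomputable def stepIndex (τ t : ℝ) : ℕ := ⌈t / τ⌉₊ - 1

open Metric

lemma sphereUniform_prob (N : ℕ) (hN : 1 ≤ N) :
    IsProbabilityMeasure (sphereUniform N) := by
  constructor
  have hmass : (volume : Measure (EuclideanSpace ℝ (Fin N))).toSphere Set.univ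
      = N * volume (Metric.ball (0 : EuclideanSpace ℝ (Fin N)) 1) := by
    rw [Measure.toSphere_apply_univ]
    congr 2
    simp [finrank_euclideanSpace]
  have h0 : (volume : Measure (EuclideanSpace ℝ (Fin N))).toSphere Set.univ ≠ 0 := by
    rw [hmass]
    refine mul_ne_zero (by exact_mod_cast Nat.one_le_iff_ne_zero.mp hN)
      (measure_ball_pos _ _ one_pos).ne'
  have htop : (volume : Measure (EuclideanSpace ℝ (Fin N))).toSphere Set.univ ≠ ⊤ :=
    (measure_lt_top _ _).ne
  rw [sphereUniform, Measure.smul_apply,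
    Measure.map_apply measurable_subtype_coe MeasurableSet.univ]
  simp only [Set.preimage_univ, smul_eq_mul]
  exact ENNReal.inv_mul_cancel h0 htop

section
variable {N : ℕ} {cstar C lam : ℝ}

lemma sphMean_zero (hN : 1 ≤ N) (f : EuclideanSpace ℝ (Fin N) → ℝ) (x : EuclideanSpace ℝ (Fin N)) :
    sphMean N 0 f x = f x := by
  haveI := sphereUniform_prob N hN
  simp [sphMean]

lemma sphMean_bound (hN : 1 ≤ N) {f : EuclideanSpace ℝ (Fin N) → ℝ} {R : ℝ}
    (hf : ∀ z, |f z| ≤ C) (x : EuclideanSpace ℝ (Fin N)) : |sphMean N R f x| ≤ C := by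
  haveI := sphereUniform_prob N hN
  have := norm_integral_le_of_norm_le_const (μ := sphereUniform N)
    (f := fun y => f (x + R • y)) (C := C) (Filter.Eventually.of_forall fun y => by
      simpa [Real.norm_eq_abs] using hf (x + R • y))
  simpa [sphMean, Real.norm_eq_abs, measure_univ] using this

lemma sphMean_cont_step (hN : 1 ≤ N) {g : ℝ → EuclideanSpace ℝ (Fin N) → ℝ}
    (hg : ∀ c ∈ Set.Ioo (0:ℝ) cstar, ∀ z,
      ContinuousAt (fun p : ℝ × EuclideanSpace ℝ (Fin N) => g p.1 p.2) (c, z))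
    (hb : ∀ c ∈ Set.Ioo (0:ℝ) cstar, ∀ z, |g c z| ≤ C) (R : ℝ)
    {c₀ : ℝ} (hc₀ : c₀ ∈ Set.Ioo (0:ℝ) cstar) (z₀ : EuclideanSpace ℝ (Fin N)) :
    ContinuousAt (fun p : ℝ × EuclideanSpace ℝ (Fin N) => sphMean N R (g p.1) p.2) (c₀, z₀) := by
  haveI := sphereUniform_prob N hN
  have hopen : ∀ᶠ p : ℝ × EuclideanSpace ℝ (Fin N) in nhds (c₀, z₀),
      p.1 ∈ Set.Ioo (0:ℝ) cstar := by
    have : IsOpen {p : ℝ × EuclideanSpace ℝ (Fin N) | p.1 ∈ Set.Ioo (0:ℝ) cstar} :=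
      isOpen_Ioo.preimage continuous_fst
    exact this.mem_nhds hc₀
  refine continuousAt_of_dominated (bound := fun _ => C) ?_ ?_ (integrable_const C) ?_
  · filter_upwards [hopen] with p hp
    refine (continuous_iff_continuousAt.mpr fun y => ?_).aestronglyMeasurable
    have hmap : Continuous fun y : EuclideanSpace ℝ (Fin N) => ((p.1 : ℝ), p.2 + R • y) :=
      continuous_const.prodMk (continuous_const.add (continuous_const_smul R))
    show ContinuousAt ((fun q : ℝ × EuclideanSpace ℝ (Fin N) => g q.1 q.2) ∘
      (fun y => (p.1, p.2 + R • y))) y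
    exact ContinuousAt.comp (hg p.1 hp (p.2 + R • y)) hmap.continuousAt
  · filter_upwards [hopen] with p hp
    exact Filter.Eventually.of_forall fun y => by
      simpa [Real.norm_eq_abs] using hb p.1 hp (p.2 + R • y)
  · refine Filter.Eventually.of_forall fun y => ?_
    have hmap : Continuous fun p : ℝ × EuclideanSpace ℝ (Fin N) => (p.1, p.2 + R • y) :=
      continuous_fst.prodMk (continuous_snd.add continuous_const)
    show ContinuousAt ((fun q : ℝ × EuclideanSpace ℝ (Fin N) => g q.1 q.2) ∘
      (fun p : ℝ × EuclideanSpace ℝ (Fin N) => (p.1, p.2 + R • y))) (c₀, z₀)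
    exact ContinuousAt.comp (hg c₀ hc₀ (z₀ + R • y)) hmap.continuousAt

lemma sphMean_cont_cR (hN : 1 ≤ N) {g : ℝ → EuclideanSpace ℝ (Fin N) → ℝ}
    (hg : ∀ c ∈ Set.Ioo (0:ℝ) cstar, ∀ z,
      ContinuousAt (fun p : ℝ × EuclideanSpace ℝ (Fin N) => g p.1 p.2) (c, z))
    (hb : ∀ c ∈ Set.Ioo (0:ℝ) cstar, ∀ z, |g c z| ≤ C) (x : EuclideanSpace ℝ (Fin N))
    {c₀ R₀ : ℝ} (hc₀ : c₀ ∈ Set.Ioo (0:ℝ) cstar) :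
    ContinuousAt (fun p : ℝ × ℝ => sphMean N p.2 (g p.1) x) (c₀, R₀) := by
  haveI := sphereUniform_prob N hN
  have hopen : ∀ᶠ p : ℝ × ℝ in nhds (c₀, R₀), p.1 ∈ Set.Ioo (0:ℝ) cstar := by
    have : IsOpen {p : ℝ × ℝ | p.1 ∈ Set.Ioo (0:ℝ) cstar} := isOpen_Ioo.preimage continuous_fst
    exact this.mem_nhds hc₀
  refine continuousAt_of_dominated (bound := fun _ => C) ?_ ?_ (integrable_const C) ?_
  · filter_upwards [hopen] with p hp
    refine (continuous_iff_continuousAt.mpr fun y => ?_).aestronglyMeasurable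
    have hmap : Continuous fun y : EuclideanSpace ℝ (Fin N) => ((p.1 : ℝ), x + p.2 • y) :=
      continuous_const.prodMk (continuous_const.add (continuous_const_smul p.2))
    show ContinuousAt ((fun q : ℝ × EuclideanSpace ℝ (Fin N) => g q.1 q.2) ∘
      (fun y => (p.1, x + p.2 • y))) y
    exact ContinuousAt.comp (hg p.1 hp (x + p.2 • y)) hmap.continuousAt
  · filter_upwards [hopen] with p hp
    exact Filter.Eventually.of_forall fun y => by
      simpa [Real.norm_eq_abs] using hb p.1 hp (x + p.2 • y)
  · refine Filter.Eventually.of_forall fun y => ?_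
    have hmap : Continuous fun p : ℝ × ℝ => (p.1, x + p.2 • y) :=
      continuous_fst.prodMk (continuous_const.add (continuous_snd.smul continuous_const))
    show ContinuousAt ((fun q : ℝ × EuclideanSpace ℝ (Fin N) => g q.1 q.2) ∘
      (fun p : ℝ × ℝ => (p.1, x + p.2 • y))) (c₀, R₀)
    exact ContinuousAt.comp (hg c₀ hc₀ (x + R₀ • y)) hmap.continuousAt

lemma iterate_cont_bound (hN : 1 ≤ N) (hlam : 0 < lam)
    {u : ℝ → EuclideanSpace ℝ (Fin N) → ℝ}
    (hg : ∀ c ∈ Set.Ioo (0:ℝ) cstar, ∀ z,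
      ContinuousAt (fun p : ℝ × EuclideanSpace ℝ (Fin N) => u p.1 p.2) (c, z))
    (hb : ∀ c ∈ Set.Ioo (0:ℝ) cstar, ∀ z, |u c z| ≤ C) (m : ℕ) :
    (∀ c ∈ Set.Ioo (0:ℝ) cstar, ∀ z,
      ContinuousAt (fun p : ℝ × EuclideanSpace ℝ (Fin N) =>
        (sphMean N lam)^[m] (u p.1) p.2) (c, z)) ∧
    (∀ c ∈ Set.Ioo (0:ℝ) cstar, ∀ z, |(sphMean N lam)^[m] (u c) z| ≤ C) := by
  induction m with
  | zero =>
    refine ⟨fun c hc z => ?_, fun c hc z => ?_⟩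
    · simpa only [Function.iterate_zero, id_eq] using hg c hc z
    · simpa only [Function.iterate_zero, id_eq] using hb c hc z
  | succ m ih =>
    constructor
    · intro c hc z
      simp only [Function.iterate_succ_apply']
      exact sphMean_cont_step hN ih.1 ih.2 lam hc z
    · intro c hc z
      rw [Function.iterate_succ_apply']
      exact sphMean_bound hN (ih.2 c hc) z

end

/-- For a family of causal diffusions sharing the same wave length `λ = c τ_c`
(so `τ_c = λ / c`) with jointly continuous bounded initial data `u_c`, the map
`c ↦ v_c(x,t)` is continuous on `(0, c*)` for each fixed `x` and `t > 0`. -/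
theorem stmt_19 (N : ℕ) (hN : 1 ≤ N) (lam cstar : ℝ)
    (hlam : 0 < lam) (hcstar : 0 < cstar)
    (u : ℝ → EuclideanSpace ℝ (Fin N) → ℝ)
    (huc : ContinuousOn (fun p : ℝ × EuclideanSpace ℝ (Fin N) => u p.1 p.2)
      (Set.Ioo 0 cstar ×ˢ Set.univ))
    (hub : ∃ C : ℝ, ∀ c ∈ Set.Ioo (0 : ℝ) cstar, ∀ x, |u c x| ≤ C)
    (x : EuclideanSpace ℝ (Fin N)) (t : ℝ) (ht : 0 < t) :
    ContinuousOn
      (fun c => sphMean N (c * (t - stepIndex (lam / c) t * (lam / c)))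
        ((sphMean N lam)^[stepIndex (lam / c) t] (u c)) x)
      (Set.Ioo 0 cstar) := by
  obtain ⟨C, hC⟩ := hub
  have hIooOpen : IsOpen ((Set.Ioo (0:ℝ) cstar) ×ˢ (Set.univ : Set (EuclideanSpace ℝ (Fin N)))) :=
    isOpen_Ioo.prod isOpen_univ
  have hgc : ∀ c ∈ Set.Ioo (0:ℝ) cstar, ∀ z,
      ContinuousAt (fun p : ℝ × EuclideanSpace ℝ (Fin N) => u p.1 p.2) (c, z) := fun c hc z =>
    huc.continuousAt (hIooOpen.mem_nhds ⟨hc, Set.mem_univ _⟩)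
  intro c₀ hc₀
  refine ContinuousAt.continuousWithinAt ?_
  have hiter := fun m => iterate_cont_bound (cstar := cstar) hN hlam hgc hC m
  -- the rescaled time
  have hcont_r : Continuous fun c : ℝ => t * c / lam :=
    (continuous_const.mul continuous_id).div_const lam
  have hr0 : 0 < t * c₀ / lam := div_pos (mul_pos ht hc₀.1) hlam
  have hk1 : 1 ≤ ⌈t * c₀ / lam⌉₊ := Nat.one_le_ceil_iff.mpr hr0
  set m₀ := ⌈t * c₀ / lam⌉₊ - 1 with hm₀def
  have hkm : ⌈t * c₀ / lam⌉₊ = m₀ + 1 := by omega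
  have hm₀lt : (m₀ : ℝ) < t * c₀ / lam := Nat.lt_ceil.mp (by omega)
  have hle : t * c₀ / lam ≤ (m₀ : ℝ) + 1 := by
    have h := Nat.le_ceil (t * c₀ / lam)
    rw [hkm] at h
    exact_mod_cast h
  -- continuity of the fixed-index functions
  have hφ : ∀ m : ℕ, ContinuousAt
      (fun c => sphMean N (c * t - m * lam) ((sphMean N lam)^[m] (u c)) x) c₀ := by
    intro m
    have h1 := sphMean_cont_cR hN (hiter m).1 (hiter m).2 x
      (R₀ := c₀ * t - (m : ℝ) * lam) hc₀
    have hmap : Continuous fun c : ℝ => (c, c * t - (m : ℝ) * lam) :=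
      continuous_id.prodMk ((continuous_id.mul continuous_const).sub continuous_const)
    show ContinuousAt ((fun p : ℝ × ℝ => sphMean N p.2 ((sphMean N lam)^[m] (u p.1)) x) ∘
      (fun c => (c, c * t - (m : ℝ) * lam))) c₀
    exact ContinuousAt.comp (f := fun c : ℝ => (c, c * t - (m : ℝ) * lam)) h1
      hmap.continuousAt
  -- value identification
  have hval : ∀ c : ℝ, 0 < c → ∀ m : ℕ, ⌈t * c / lam⌉₊ = m + 1 →
      sphMean N (c * (t - stepIndex (lam / c) t * (lam / c)))
        ((sphMean N lam)^[stepIndex (lam / c) t] (u c)) x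
      = sphMean N (c * t - m * lam) ((sphMean N lam)^[m] (u c)) x := by
    intro c hc m hm
    have hstep : stepIndex (lam / c) t = m := by
      rw [stepIndex, div_div_eq_mul_div, hm]
      omega
    rw [hstep]
    congr 1
    have hcne : c ≠ 0 := hc.ne'
    field_simp
  have hceil_of : ∀ c : ℝ, ∀ m : ℕ, (m : ℝ) < t * c / lam → t * c / lam ≤ (m : ℝ) + 1 →
      ⌈t * c / lam⌉₊ = m + 1 := by
    intro c m h1 h2
    rw [Nat.ceil_eq_iff (Nat.succ_ne_zero m)]
    refine ⟨by simpa using h1, by push_cast; exact h2⟩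
  rcases eq_or_lt_of_le hle with heq | hlt2
  · -- boundary case : t * c₀ / lam = m₀ + 1
    have hceil₀ : ⌈t * c₀ / lam⌉₊ = m₀ + 1 := hkm
    have htarget₀ := hval c₀ hc₀.1 m₀ hceil₀
    have htc : t * c₀ = ((m₀ : ℝ) + 1) * lam := (div_eq_iff hlam.ne').mp heq
    have hlam_eq : c₀ * t - (m₀ : ℝ) * lam = lam := by
      have : c₀ * t = ((m₀ : ℝ) + 1) * lam := by rw [mul_comm]; exact htc
      linarith
    have hzero_eq : c₀ * t - ((m₀ + 1 : ℕ) : ℝ) * lam = 0 := by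
      have : c₀ * t = ((m₀ : ℝ) + 1) * lam := by rw [mul_comm]; exact htc
      push_cast
      linarith
    have hmatch : sphMean N (c₀ * t - (m₀ : ℝ) * lam) ((sphMean N lam)^[m₀] (u c₀)) x
        = sphMean N (c₀ * t - ((m₀ + 1 : ℕ) : ℝ) * lam) ((sphMean N lam)^[m₀ + 1] (u c₀)) x := by
      rw [hlam_eq, hzero_eq, sphMean_zero hN, Function.iterate_succ_apply']
    rw [ContinuousAt, ← nhdsLE_sup_nhdsGT (a := c₀), Filter.tendsto_sup]
    constructor
    · -- left limit
      have hevL : ∀ᶠ c in nhdsWithin c₀ (Set.Iic c₀),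
          sphMean N (c * (t - stepIndex (lam / c) t * (lam / c)))
            ((sphMean N lam)^[stepIndex (lam / c) t] (u c)) x
          = sphMean N (c * t - m₀ * lam) ((sphMean N lam)^[m₀] (u c)) x := by
        have h1 : ∀ᶠ c in nhds c₀, c ∈ Set.Ioo (0:ℝ) cstar := isOpen_Ioo.eventually_mem hc₀
        have h2 : ∀ᶠ c in nhds c₀, (m₀ : ℝ) < t * c / lam :=
          (isOpen_lt continuous_const hcont_r).eventually_mem hm₀lt
        filter_upwards [eventually_mem_nhdsWithin, h1.filter_mono nhdsWithin_le_nhds,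
          h2.filter_mono nhdsWithin_le_nhds] with c hcle hc hm
        have hrle : t * c / lam ≤ (m₀ : ℝ) + 1 := by
          have hmono : t * c / lam ≤ t * c₀ / lam := by
            have := mul_le_mul_of_nonneg_left (Set.mem_Iic.mp hcle) ht.le
            exact (div_le_div_iff_of_pos_right hlam).mpr this
          linarith
        exact hval c hc.1 m₀ (hceil_of c m₀ hm hrle)
      have hT := ((hφ m₀).continuousWithinAt (s := Set.Iic c₀)).tendsto
      rw [htarget₀]
      exact hT.congr' (hevL.mono fun c h => h.symm)
    · -- right limit
      have hevR : ∀ᶠ c in nhdsWithin c₀ (Set.Ioi c₀),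
          sphMean N (c * (t - stepIndex (lam / c) t * (lam / c)))
            ((sphMean N lam)^[stepIndex (lam / c) t] (u c)) x
          = sphMean N (c * t - ((m₀ + 1 : ℕ) : ℝ) * lam) ((sphMean N lam)^[m₀ + 1] (u c)) x := by
        have h1 : ∀ᶠ c in nhds c₀, c ∈ Set.Ioo (0:ℝ) cstar := isOpen_Ioo.eventually_mem hc₀
        have h2 : ∀ᶠ c in nhds c₀, t * c / lam < (m₀ : ℝ) + 2 :=
          (isOpen_lt hcont_r continuous_const).eventually_mem
            (show t * c₀ / lam < (m₀ : ℝ) + 2 by linarith)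
        filter_upwards [eventually_mem_nhdsWithin, h1.filter_mono nhdsWithin_le_nhds,
          h2.filter_mono nhdsWithin_le_nhds] with c hcgt hc hm
        have hgt : ((m₀ : ℝ) + 1) < t * c / lam := by
          have hmono : t * c₀ / lam < t * c / lam := by
            have := mul_lt_mul_of_pos_left (Set.mem_Ioi.mp hcgt) ht
            exact (div_lt_div_iff_of_pos_right hlam).mpr this
          linarith
        have hceil : ⌈t * c / lam⌉₊ = (m₀ + 1) + 1 := by
          have := hceil_of c (m₀ + 1) (by push_cast; exact hgt) (by push_cast; linarith)
          exact this
        exact hval c hc.1 (m₀ + 1) hceil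
      have hT := ((hφ (m₀ + 1)).continuousWithinAt (s := Set.Ioi c₀)).tendsto
      rw [htarget₀, hmatch]
      exact hT.congr' (hevR.mono fun c h => h.symm)
  · -- interior case
    have hev : ∀ᶠ c in nhds c₀,
        sphMean N (c * (t - stepIndex (lam / c) t * (lam / c)))
          ((sphMean N lam)^[stepIndex (lam / c) t] (u c)) x
        = sphMean N (c * t - m₀ * lam) ((sphMean N lam)^[m₀] (u c)) x := by
      have h1 : ∀ᶠ c in nhds c₀, c ∈ Set.Ioo (0:ℝ) cstar := isOpen_Ioo.eventually_mem hc₀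
      have h2 : ∀ᶠ c in nhds c₀, (m₀ : ℝ) < t * c / lam :=
        (isOpen_lt continuous_const hcont_r).eventually_mem hm₀lt
      have h3 : ∀ᶠ c in nhds c₀, t * c / lam < (m₀ : ℝ) + 1 :=
        (isOpen_lt hcont_r continuous_const).eventually_mem hlt2
      filter_upwards [h1, h2, h3] with c hc hml hmr
      exact hval c hc.1 m₀ (hceil_of c m₀ hml hmr.le)
    exact (hφ m₀).congr (hev.mono fun c h => h.symm)
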